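/- Let n be a nonnegative integer with n not divisible by 4, and let h_n be the n-th Hermite function. Then Z h_n(0,0) = 0, where Z is the Zak transform. -/

import Mathlib

open MeasureTheory Complex
open scoped Real

/-- The Zak transform `Zf(x,ω) = Σ_{k∈ℤ} f(k-x) e^{2πiωk}`. -/
noncomputable def Zak (f : ℝ → ℂ) (x ω : ℝ) : ℂ :=
  ∑' k : ℤ, f ((k : ℝ) - x) * Complex.exp (2 * π * Complex.I * ω * (k : ℝ))

/-- The Wiener space `W₀(ℝ)` of continuous functions with summable sequence of local sup
norms (hence bounded). -/
def MemWienerSpace (f : ℝ → ℂ) : Prop :=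
  Continuous f ∧ Summable (fun k : ℤ => ⨆ t : Set.Icc (k : ℝ) ((k : ℝ) + 1), ‖f t‖)

/-- The `n`-th Hermite function
`h_n(t) = (-1)^n C_n e^{πt²} (d/dt)^n e^{-2πt²}`, `C_n = 2^{1/4} / √((2π)^n 2^n n!)`. -/
noncomputable def hermiteFun (n : ℕ) (t : ℝ) : ℂ :=
  (((-1 : ℝ) ^ n * (2 ^ ((1 : ℝ) / 4) / Real.sqrt ((2 * π) ^ n * 2 ^ n * n.factorial)) *
      Real.exp (π * t ^ 2) *
      iteratedDeriv n (fun s : ℝ => Real.exp (-(2 * π * s ^ 2))) t : ℝ) : ℂ)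

open Polynomial Filter Asymptotics FourierTransform

noncomputable def pZ : ℕ → Polynomial ℝ
  | 0 => 1
  | n + 1 => derivative (pZ n) - Polynomial.C (4 * π) * Polynomial.X * pZ n

/-- polynomial times gaussian, complex valued -/
noncomputable def PG (p : Polynomial ℝ) : ℝ → ℂ :=
  fun t => ((p.eval t * Real.exp (-(π * t ^ 2)) : ℝ) : ℂ)

lemma hasDerivAt_gauss (c t : ℝ) :
    HasDerivAt (fun s : ℝ => Real.exp (-(c * s ^ 2))) (-(2 * c * t) * Real.exp (-(c * t ^ 2))) t := by
  have h : HasDerivAt (fun s : ℝ => -(c * s ^ 2)) (-(2 * c * t)) t := by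
    simpa [mul_comm, mul_assoc, mul_left_comm] using ((hasDerivAt_pow 2 t).const_mul c).fun_neg
  simpa [mul_comm] using h.exp

lemma gauss_iteratedDeriv (n : ℕ) :
    iteratedDeriv n (fun s : ℝ => Real.exp (-(2 * π * s ^ 2)))
      = fun t => (pZ n).eval t * Real.exp (-(2 * π * t ^ 2)) := by
  induction n with
  | zero => simp [pZ]
  | succ n ih =>
    rw [iteratedDeriv_succ, ih]
    funext t
    have h1 : HasDerivAt (fun t : ℝ => (pZ n).eval t * Real.exp (-(2 * π * t ^ 2)))
        ((derivative (pZ n)).eval t * Real.exp (-(2 * π * t ^ 2)) +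
          (pZ n).eval t * (-(2 * (2 * π) * t) * Real.exp (-(2 * π * t ^ 2)))) t :=
      ((pZ n).hasDerivAt t).mul (hasDerivAt_gauss (2 * π) t)
    rw [h1.deriv, pZ]
    simp only [eval_sub, eval_mul, eval_C, eval_X]
    ring

lemma hermite_eq_PG (n : ℕ) (t : ℝ) :
    hermiteFun n t =
      (((-1 : ℝ) ^ n * (2 ^ ((1 : ℝ) / 4) / Real.sqrt ((2 * π) ^ n * 2 ^ n * n.factorial)) : ℝ) : ℂ)
        * PG (pZ n) t := by
  rw [hermiteFun, gauss_iteratedDeriv, PG, ← Complex.ofReal_mul]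
  congr 1
  have : Real.exp (π * t ^ 2) * Real.exp (-(2 * π * t ^ 2)) = Real.exp (-(π * t ^ 2)) := by
    rw [← Real.exp_add]; ring_nf
  calc (-1 : ℝ) ^ n * (2 ^ ((1 : ℝ) / 4) / Real.sqrt ((2 * π) ^ n * 2 ^ n * n.factorial)) *
      Real.exp (π * t ^ 2) * ((pZ n).eval t * Real.exp (-(2 * π * t ^ 2)))
      = (-1 : ℝ) ^ n * (2 ^ ((1 : ℝ) / 4) / Real.sqrt ((2 * π) ^ n * 2 ^ n * n.factorial)) *
        ((pZ n).eval t * (Real.exp (π * t ^ 2) * Real.exp (-(2 * π * t ^ 2)))) := by ring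
    _ = _ := by rw [this]

lemma PG_hasDerivAt (p : Polynomial ℝ) (t : ℝ) :
    HasDerivAt (PG p) (PG (derivative p - Polynomial.C (2 * π) * Polynomial.X * p) t) t := by
  have h : HasDerivAt (fun t : ℝ => p.eval t * Real.exp (-(π * t ^ 2)))
      ((derivative p).eval t * Real.exp (-(π * t ^ 2)) +
        p.eval t * (-(2 * π * t) * Real.exp (-(π * t ^ 2)))) t :=
    (p.hasDerivAt t).mul (hasDerivAt_gauss π t)
  have h2 := h.ofReal_comp
  convert h2 using 1
  · rfl
  unfold PG
  push_cast
  simp only [eval_sub, eval_mul, eval_C, eval_X]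
  push_cast
  ring

lemma PG_deriv (p : Polynomial ℝ) :
    deriv (PG p) = PG (derivative p - Polynomial.C (2 * π) * Polynomial.X * p) := by
  funext t; exact (PG_hasDerivAt p t).deriv

lemma PG_differentiable (p : Polynomial ℝ) : Differentiable ℝ (PG p) :=
  fun t => (PG_hasDerivAt p t).differentiableAt

lemma PG_continuous (p : Polynomial ℝ) : Continuous (PG p) :=
  Complex.continuous_ofReal.comp (p.continuous.mul ((Real.continuous_exp.comp (continuous_const.mul (continuous_pow 2)).neg)))

lemma PG_integrable_real (p : Polynomial ℝ) :
    Integrable (fun t : ℝ => p.eval t * Real.exp (-(π * t ^ 2))) := by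
  induction p using Polynomial.induction_on' with
  | add p q hp hq =>
    simp only [eval_add, add_mul]
    exact hp.add hq
  | monomial k a =>
    have h : Integrable (fun x : ℝ => x ^ k * Real.exp (-π * x ^ 2)) := by
      have := integrable_rpow_mul_exp_neg_mul_sq Real.pi_pos
        (s := (k : ℝ)) (lt_of_lt_of_le neg_one_lt_zero (Nat.cast_nonneg k))
      simpa [Real.rpow_natCast] using this
    have h2 := h.const_mul a
    apply h2.congr
    filter_upwards with x
    simp only [eval_monomial, neg_mul]
    ring

lemma PG_integrable (p : Polynomial ℝ) : Integrable (PG p) :=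
  (PG_integrable_real p).ofReal

lemma ev_abs_cocompact : ∀ᶠ x : ℝ in cocompact ℝ, 1 ≤ |x| := by
  rw [cocompact_eq_atBot_atTop, eventually_sup]
  constructor
  · filter_upwards [eventually_le_atBot (-1 : ℝ)] with x hx
    exact le_abs.2 (Or.inr (by linarith))
  · filter_upwards [eventually_ge_atTop (1 : ℝ)] with x hx
    exact le_abs.2 (Or.inl hx)

lemma PG_isBigO (p : Polynomial ℝ) :
    (PG p) =O[cocompact ℝ] (fun x : ℝ => |x| ^ (-2 : ℝ)) := by
  induction p using Polynomial.induction_on' with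
  | add p q hp hq =>
    have : PG (p + q) = fun t => PG p t + PG q t := by
      funext t; rw [PG, PG, PG]; push_cast [eval_add]; ring
    rw [this]; exact hp.add hq
  | monomial k a =>
    have T := tendsto_rpow_abs_mul_exp_neg_mul_sq_cocompact Real.pi_pos ((k : ℝ) + 2)
    have hT : ∀ᶠ x : ℝ in cocompact ℝ, |x| ^ ((k : ℝ) + 2) * Real.exp (-π * x ^ 2) ≤ 1 :=
      T.eventually_le_const (by norm_num)
    rw [isBigO_iff]
    refine ⟨|a|, ?_⟩
    filter_upwards [hT, ev_abs_cocompact] with x h1 h2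
    have hx : (0 : ℝ) < |x| := lt_of_lt_of_le one_pos h2
    have key : |x| ^ (k : ℝ) * Real.exp (-π * x ^ 2) ≤ |x| ^ (-2 : ℝ) := by
      have e1 : |x| ^ ((k : ℝ)) = |x| ^ ((k : ℝ) + 2) * |x| ^ (-2 : ℝ) := by
        rw [← Real.rpow_add hx]; ring_nf
      rw [e1, mul_right_comm]
      calc |x| ^ ((k : ℝ) + 2) * Real.exp (-π * x ^ 2) * |x| ^ (-2 : ℝ)
          ≤ 1 * |x| ^ (-2 : ℝ) := by
            apply mul_le_mul_of_nonneg_right h1 (Real.rpow_nonneg (abs_nonneg x) _)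
        _ = |x| ^ (-2 : ℝ) := one_mul _
    have hnorm : ‖PG (monomial k a) x‖ = |a| * (|x| ^ (k : ℝ) * Real.exp (-π * x ^ 2)) := by
      rw [PG, Complex.norm_real]
      simp only [eval_monomial, Real.norm_eq_abs, abs_mul, Real.abs_exp, _root_.abs_pow,
        Real.rpow_natCast, neg_mul]
      ring
    rw [hnorm]
    have : ‖|x| ^ (-2 : ℝ)‖ = |x| ^ (-2 : ℝ) :=
      Real.norm_of_nonneg (Real.rpow_nonneg (abs_nonneg x) _)
    rw [this]
    exact mul_le_mul_of_nonneg_left key (abs_nonneg a)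

lemma FI_sub {f g : ℝ → ℂ} (hf : Integrable f) (hg : Integrable g) (ξ : ℝ) :
    𝓕 (fun x => f x - g x) ξ = 𝓕 f ξ - 𝓕 g ξ := by
  simp_rw [Real.fourier_eq, smul_sub]
  exact integral_sub ((Real.fourierIntegral_convergent_iff ξ).2 hf)
    ((Real.fourierIntegral_convergent_iff ξ).2 hg)

lemma FI_const_mul (c : ℂ) (f : ℝ → ℂ) (ξ : ℝ) :
    𝓕 (fun x => c * f x) ξ = c * 𝓕 f ξ := by
  simp_rw [Real.fourier_eq, Circle.smul_def, smul_eq_mul, ← integral_const_mul]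
  congr 1; funext v; ring

lemma fourierPG_pZ : ∀ n : ℕ, 𝓕 (PG (pZ n)) = fun ξ : ℝ => (-Complex.I) ^ n * PG (pZ n) ξ := by
  intro n
  induction n with
  | zero =>
    have h0 : PG (pZ 0) = fun x : ℝ => Complex.exp (-(π : ℂ) * 1 * (x : ℂ) ^ 2) := by
      funext x
      rw [PG]
      show ((((1 : Polynomial ℝ)).eval x * Real.exp (-(π * x ^ 2)) : ℝ) : ℂ) = _
      rw [eval_one, one_mul, Complex.ofReal_exp]
      congr 1
      push_cast
      ring
    rw [h0, fourier_gaussian_pi (by norm_num)]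
    funext ξ
    rw [pow_zero, one_mul]
    show _ = Complex.exp (-(π : ℂ) * 1 * (ξ : ℂ) ^ 2)
    norm_num [Complex.one_cpow]
  | succ n ih =>
    set c : ℂ := (-Complex.I) ^ n with hc
    set A : ℝ → ℂ := PG (pZ n) with hA_def
    set B : ℝ → ℂ := PG (pZ (n + 1)) with hB_def
    have hA : Integrable A := PG_integrable _
    have hA' : Integrable (deriv A) := by
      rw [hA_def, PG_deriv]; exact PG_integrable _
    have hdiff : Differentiable ℝ A := PG_differentiable _
    have hxA : Integrable (fun x : ℝ => x • A x) := by
      apply (PG_integrable (Polynomial.X * pZ n)).congr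
      filter_upwards with x
      rw [hA_def, PG, PG, Complex.real_smul]
      push_cast [eval_mul, eval_X]
      ring
    have hBd : ∀ t : ℝ, B t = deriv A t - (2 * π * (t : ℂ)) * A t := by
      intro t
      rw [hA_def, hB_def, PG_deriv]
      show PG (pZ (n + 1)) t = _
      rw [pZ]
      simp only [PG, eval_sub, eval_mul, eval_C, eval_X]
      push_cast
      ring
    have hderivA : ∀ t : ℝ, deriv A t = B t + (2 * π * (t : ℂ)) * A t := by
      intro t; rw [hBd t]; ring
    set T : ℝ → ℂ := 𝓕 (fun x : ℝ => (2 * π * (x : ℂ)) * A x) with hT_def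
    have hT_int : Integrable (fun t : ℝ => (2 * π * (t : ℂ)) * A t) := by
      apply (PG_integrable (Polynomial.C (2 * π) * Polynomial.X * pZ n)).congr
      filter_upwards with x
      rw [hA_def, PG, PG]
      push_cast [eval_mul, eval_X, eval_C]
      ring
    have e1 : 𝓕 (deriv A) = fun ξ : ℝ => (2 * π * Complex.I * ξ) • 𝓕 A ξ :=
      Real.fourier_deriv hA hdiff hA'
    have e2 : deriv (𝓕 A) = 𝓕 (fun x : ℝ => (-2 * π * Complex.I * x) • A x) :=
      Real.deriv_fourier hA hxA
    have e3 : deriv (𝓕 A) = fun ξ : ℝ => c * deriv A ξ := by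
      rw [ih]
      funext ξ
      exact deriv_const_mul c (hdiff ξ)
    have e4 : 𝓕 (fun x : ℝ => (-2 * π * Complex.I * x) • A x)
        = fun ξ : ℝ => -Complex.I * T ξ := by
      have heq : (fun x : ℝ => (-2 * π * Complex.I * x) • A x)
          = fun x : ℝ => -Complex.I * ((2 * π * (x : ℂ)) * A x) := by
        funext x; rw [smul_eq_mul]; ring
      rw [heq, hT_def]
      funext ξ
      exact FI_const_mul _ _ ξ
    have h6 : (fun ξ : ℝ => -Complex.I * T ξ) = fun ξ : ℝ => c * deriv A ξ := by
      rw [← e4, ← e2, e3]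
    have hII : Complex.I * -Complex.I = 1 := by
      simp [Complex.I_mul_I]
    have h5 : ∀ ξ : ℝ, T ξ = Complex.I * (c * deriv A ξ) := by
      intro ξ
      calc T ξ = (Complex.I * -Complex.I) * T ξ := by rw [hII, one_mul]
        _ = Complex.I * (-Complex.I * T ξ) := by ring
        _ = Complex.I * (c * deriv A ξ) := by rw [congrFun h6 ξ]
    funext ξ
    have hBfun : B = fun t : ℝ => deriv A t - (2 * π * (t : ℂ)) * A t := funext hBd
    calc 𝓕 B ξ = 𝓕 (fun t : ℝ => deriv A t - (2 * π * (t : ℂ)) * A t) ξ := by rw [← hBfun]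
      _ = 𝓕 (deriv A) ξ - T ξ := FI_sub hA' hT_int ξ
      _ = (2 * π * Complex.I * ξ) * (c * A ξ)
            - Complex.I * (c * (B ξ + (2 * π * (ξ : ℂ)) * A ξ)) := by
          rw [congrFun e1 ξ, congrFun ih ξ, smul_eq_mul, h5 ξ, hderivA ξ]
      _ = (-Complex.I) ^ (n + 1) * B ξ := by
          rw [pow_succ, ← hc]
          ring

lemma negI_pow_ne_one {n : ℕ} (hn : ¬ (4 ∣ n)) : (-Complex.I) ^ n ≠ 1 := by
  have h4 : (-Complex.I) ^ 4 = 1 := by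
    have : (-Complex.I) ^ 4 = Complex.I ^ 4 := by ring
    rw [this, Complex.I_pow_four]
  have hmod : (-Complex.I) ^ n = (-Complex.I) ^ (n % 4) := by
    conv_lhs => rw [← Nat.div_add_mod n 4]
    rw [pow_add, pow_mul, h4, one_pow, one_mul]
  rw [hmod]
  have hm : n % 4 = 1 ∨ n % 4 = 2 ∨ n % 4 = 3 := by omega
  rcases hm with h | h | h <;> rw [h] <;>
    norm_num [pow_succ, Complex.ext_iff]

lemma tsum_PG_pZ_eq_zero {n : ℕ} (hn : ¬ (4 ∣ n)) :
    ∑' k : ℤ, PG (pZ n) (k : ℝ) = 0 := by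
  set S : ℂ := ∑' k : ℤ, PG (pZ n) (k : ℝ) with hS_def
  have hFou := fourierPG_pZ n
  have hFbigO : (𝓕 (PG (pZ n))) =O[cocompact ℝ] (fun x : ℝ => |x| ^ (-2 : ℝ)) := by
    rw [hFou]
    exact (PG_isBigO (pZ n)).const_mul_left _
  have hPoisson := Real.tsum_eq_tsum_fourier_of_rpow_decay (PG_continuous (pZ n))
    one_lt_two (PG_isBigO (pZ n)) hFbigO 0
  simp only [zero_add, hFou, QuotientAddGroup.mk_zero, fourier_eval_zero, mul_one] at hPoisson
  rw [tsum_mul_left] at hPoisson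
  have hS : S = (-Complex.I) ^ n * S := hPoisson
  have hkey : (1 - (-Complex.I) ^ n) * S = 0 := by
    rw [sub_mul, one_mul, ← hS, sub_self]
  rcases mul_eq_zero.1 hkey with h | h
  · exact absurd (by linear_combination -h : (-Complex.I) ^ n = 1) (negI_pow_ne_one hn)
  · exact h

/-- For `n` not divisible by `4`, the Zak transform of the `n`-th Hermite function vanishes
at the origin: `Z h_n(0,0) = 0`. -/
theorem zak_hermite_zero_at_origin (n : ℕ) (hn : ¬ (4 ∣ n)) :
    Zak (hermiteFun n) 0 0 = 0 := by
  rw [Zak]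
  simp only [Complex.ofReal_zero, mul_zero, zero_mul, Complex.exp_zero, mul_one, sub_zero]
  have hterm : ∀ k : ℤ, hermiteFun n (k : ℝ) =
      (((-1 : ℝ) ^ n * (2 ^ ((1 : ℝ) / 4) / Real.sqrt ((2 * π) ^ n * 2 ^ n * n.factorial)) : ℝ) : ℂ)
        * PG (pZ n) (k : ℝ) := fun k => hermite_eq_PG n (k : ℝ)
  calc ∑' k : ℤ, hermiteFun n (k : ℝ)
      = ∑' k : ℤ, (((-1 : ℝ) ^ n *
          (2 ^ ((1 : ℝ) / 4) / Real.sqrt ((2 * π) ^ n * 2 ^ n * n.factorial)) : ℝ) : ℂ)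
          * PG (pZ n) (k : ℝ) := by
        exact tsum_congr hterm
    _ = _ * ∑' k : ℤ, PG (pZ n) (k : ℝ) := tsum_mul_left
    _ = 0 := by rw [tsum_PG_pZ_eq_zero hn, mul_zero]
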